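/- Asymptotic consensus (Lemma on invariant sets, second part): under the same hypotheses — G a connected undirected graph on n nodes with m edges, incidence matrix B, B̂ = B ⊗ I₃, x : [0, ∞) → ℝ^{3n} locally Lipschitz with Σᵢ ‖xᵢ(0)‖₂² < C < 4π², and for almost every t, x′(t) = −L_{x(t)} B̂ s(t) for some sign-selection s(t) for B̂ᵀ x(t) — the solution converges to the consensus space: dist(x(t), 𝒞) → 0 as t → ∞, where 𝒞 = {x ∈ ℝ^{3n} : x₁ = x₂ = ⋯ = xₙ}. -/

import Mathlib

open Matrix Real

noncomputable section

/-- The skew-symmetric "hat" matrix of a vector in ℝ³. -/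
def hatm (p : Fin 3 → ℝ) : Matrix (Fin 3) (Fin 3) ℝ :=
  !![0, -p 2, p 1; p 2, 0, -p 0; -p 1, p 0, 0]

/-- The Euclidean (ℓ²) norm on ℝ³. -/
def norm2 (p : Fin 3 → ℝ) : ℝ := Real.sqrt (∑ i, p i ^ 2)

/-- The unnormalized sinc function: α · sinc α = sin α, sinc 0 = 1. -/
def sinc (α : ℝ) : ℝ := if α = 0 then 1 else Real.sin α / α

/-- c(θ) = sinc(θ)/sinc²(θ/2). -/
def cfun (θ : ℝ) : ℝ := _root_.sinc θ / _root_.sinc (θ / 2) ^ 2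

/-- The symmetric part L¹ₓ of the transition matrix (L¹₀ := I₃). -/
def L1mat (x : Fin 3 → ℝ) : Matrix (Fin 3) (Fin 3) ℝ :=
  if x = 0 then 1 else
    cfun (norm2 x) • (1 : Matrix (Fin 3) (Fin 3) ℝ)
      + ((1 - cfun (norm2 x)) / norm2 x ^ 2) • vecMulVec x x

/-- The transition matrix Lₓ of the axis-angle kinematics (L₀ := I₃). -/
def Lmat (x : Fin 3 → ℝ) : Matrix (Fin 3) (Fin 3) ℝ :=
  if x = 0 then 1 else
    cfun (norm2 x) • (1 : Matrix (Fin 3) (Fin 3) ℝ)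
      + ((1 - cfun (norm2 x)) / norm2 x ^ 2) • vecMulVec x x
      + (1 / 2 : ℝ) • hatm x

/-- `s` is a sign-selection for `z`: each component lies in [−1,1] and equals
`sign (z ℓ)` whenever `z ℓ ≠ 0`. -/
def SignSel {k : Type*} (s z : k → ℝ) : Prop :=
  ∀ ℓ, s ℓ ∈ Set.Icc (-1 : ℝ) 1 ∧ (z ℓ ≠ 0 → s ℓ = Real.sign (z ℓ))

/-- Vector-valued (ℝ³-blocks) sign-selection, componentwise. -/
def SignSelV {m : ℕ} (s z : Fin m → Fin 3 → ℝ) : Prop :=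
  ∀ e k, s e k ∈ Set.Icc (-1 : ℝ) 1 ∧ (z e k ≠ 0 → s e k = Real.sign (z e k))

/-- Total Euclidean norm on the stacked state space ℝ^{3n}. -/
def nrmTot {n : ℕ} (y : Fin n → Fin 3 → ℝ) : ℝ := Real.sqrt (∑ i, ∑ k, y i k ^ 2)

/-- Euclidean distance from a stacked state to the consensus space
𝒞 = {x : x₁ = ⋯ = xₙ} (the set of vectors of the form 𝟙 ⊗ c). -/
def distToConsensus {n : ℕ} (y : Fin n → Fin 3 → ℝ) : ℝ :=
  sInf {d : ℝ | ∃ c : Fin 3 → ℝ, d = nrmTot (fun i => y i - c)}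

lemma norm2_sq (p : Fin 3 → ℝ) : norm2 p ^ 2 = ∑ i, p i ^ 2 := by
  rw [norm2, Real.sq_sqrt]
  positivity

lemma norm2_nonneg (p : Fin 3 → ℝ) : 0 ≤ norm2 p := Real.sqrt_nonneg _

lemma xLx (y v : Fin 3 → ℝ) :
    ∑ k, y k * (Lmat y).mulVec v k = ∑ k, y k * v k := by
  by_cases h : y = 0
  · simp [h]
  · have hs : (0:ℝ) < ∑ i, y i ^ 2 := by
      rcases Function.ne_iff.1 h with ⟨k, hk⟩
      have : (0:ℝ) < y k ^ 2 := by
        have := abs_pos.2 hk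
        nlinarith [sq_abs (y k)]
      calc (0:ℝ) < y k ^ 2 := this
        _ ≤ ∑ i, y i ^ 2 := Finset.single_le_sum (fun i _ => sq_nonneg (y i)) (Finset.mem_univ k)
    have hns : norm2 y ^ 2 = ∑ i, y i ^ 2 := norm2_sq y
    have hne : norm2 y ^ 2 ≠ 0 := by rw [hns]; exact ne_of_gt hs
    rw [Lmat, if_neg h]
    simp only [Matrix.mulVec, dotProduct, Fin.sum_univ_three,
      Matrix.add_apply, Matrix.smul_apply, Matrix.one_apply, vecMulVec_apply, hatm,
      Matrix.cons_val', Matrix.cons_val_zero, Matrix.cons_val_one, Matrix.head_cons,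
      Matrix.empty_val', Matrix.cons_val_fin_one, Matrix.head_fin_const,
      Matrix.cons_val_two, Matrix.tail_cons, smul_eq_mul]
    set c := cfun (norm2 y) with hc
    set d := (1 - c) / norm2 y ^ 2 with hdd
    have hq : norm2 y ^ 2 = y 0 ^ 2 + y 1 ^ 2 + y 2 ^ 2 := by
      rw [hns, Fin.sum_univ_three]
    have h2 : d * (y 0 ^ 2 + y 1 ^ 2 + y 2 ^ 2) = 1 - c := by
      rw [hdd, ← hq]; exact div_mul_cancel₀ _ hne
    norm_num
    simp only [Matrix.cons_val, Fin.reduceEq, ite_false, if_false]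
    linear_combination (y 0 * v 0 + y 1 * v 1 + y 2 * v 2) * h2

lemma mul_sign_sel (z s : ℝ) (hs : s ∈ Set.Icc (-1:ℝ) 1) (h : z ≠ 0 → s = Real.sign z) :
    z * s = |z| := by
  rcases eq_or_ne z 0 with hz | hz
  · simp [hz]
  · rw [h hz]
    rcases lt_or_gt_of_ne hz with hneg | hpos
    · rw [Real.sign_of_neg hneg, abs_of_neg hneg]; ring
    · rw [Real.sign_of_pos hpos, abs_of_pos hpos]; ring

lemma sinc_continuous : Continuous _root_.sinc := by
  rw [continuous_iff_continuousAt]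
  intro a
  rcases eq_or_ne a 0 with rfl | ha
  · have hd : HasDerivAt Real.sin 1 0 := by
      simpa using Real.hasDerivAt_sin 0
    have hs := hasDerivAt_iff_tendsto_slope.1 hd
    have hslope : ∀ u : ℝ, u ≠ 0 → slope Real.sin 0 u = _root_.sinc u := by
      intro u hu
      simp [slope, _root_.sinc, if_neg hu, sub_zero, Real.sin_zero, div_eq_inv_mul]
    have h1 : Filter.Tendsto _root_.sinc (nhdsWithin 0 {(0:ℝ)}ᶜ) (nhds 1) := by
      refine hs.congr' ?_
      filter_upwards [self_mem_nhdsWithin] with u hu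
      exact hslope u hu
    have : ContinuousAt _root_.sinc 0 := by
      unfold ContinuousAt
      rw [← nhdsNE_sup_pure (0:ℝ)]
      rw [Filter.tendsto_sup]
      refine ⟨by simpa [_root_.sinc] using h1, ?_⟩
      exact tendsto_pure_nhds _root_.sinc 0
    exact this
  · have : ContinuousAt (fun u => Real.sin u / u) a :=
      (Real.continuous_sin.continuousAt).div continuousAt_id ha
    refine this.congr ?_
    filter_upwards [isOpen_compl_singleton.mem_nhds ha] with u hu
    exact (if_neg hu).symm

lemma sinc_pos_of_lt_pi (θ : ℝ) (h0 : 0 ≤ θ) (h : θ < Real.pi) : 0 < _root_.sinc θ := by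
  rcases eq_or_lt_of_le h0 with rfl | hp
  · simp [_root_.sinc]
  · rw [_root_.sinc, if_neg (ne_of_gt hp)]
    exact div_pos (Real.sin_pos_of_pos_of_lt_pi hp h) hp

lemma cfun_continuousAt (θ : ℝ) (h0 : 0 ≤ θ) (h : θ < 2 * Real.pi) : ContinuousAt cfun θ := by
  have hden : _root_.sinc (θ / 2) ^ 2 ≠ 0 := by
    have := sinc_pos_of_lt_pi (θ/2) (by linarith) (by linarith)
    positivity
  exact (sinc_continuous.continuousAt).div
    (((sinc_continuous.comp (continuous_id.div_const 2)).continuousAt).pow 2) hden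

lemma abs_le_norm2 (y : Fin 3 → ℝ) (i : Fin 3) : |y i| ≤ norm2 y := by
  have h1 : y i ^ 2 ≤ ∑ j, y j ^ 2 :=
    Finset.single_le_sum (fun j _ => sq_nonneg (y j)) (Finset.mem_univ i)
  have := Real.sqrt_le_sqrt h1
  rwa [Real.sqrt_sq_eq_abs] at this

lemma Lmat_entry_bound (r Mc : ℝ) (hMc : 1 ≤ Mc)
    (hcb : ∀ θ, 0 ≤ θ → θ ≤ r → |cfun θ| ≤ Mc)
    (y : Fin 3 → ℝ) (hy : norm2 y ≤ r) (k j : Fin 3) :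
    |Lmat y k j| ≤ 2 * Mc + 1 + r := by
  have hr : 0 ≤ r := le_trans (norm2_nonneg y) hy
  by_cases h : y = 0
  · rw [Lmat, if_pos h, Matrix.one_apply]
    split_ifs <;> simp <;> linarith
  · have hq : (0:ℝ) < norm2 y ^ 2 := by
      rcases Function.ne_iff.1 h with ⟨i, hi⟩
      have h1 : (0:ℝ) < y i ^ 2 := by
        have := abs_pos.2 hi
        nlinarith [sq_abs (y i)]
      rw [norm2_sq]
      exact lt_of_lt_of_le h1 (Finset.single_le_sum (fun j _ => sq_nonneg (y j)) (Finset.mem_univ i))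
    have hc : |cfun (norm2 y)| ≤ Mc := hcb _ (norm2_nonneg y) hy
    have hykj : |y k * y j| ≤ norm2 y ^ 2 := by
      rw [abs_mul, sq]
      exact mul_le_mul (abs_le_norm2 y k) (abs_le_norm2 y j) (abs_nonneg _) (norm2_nonneg y)
    have hhat : |hatm y k j| ≤ norm2 y := by
      fin_cases k <;> fin_cases j <;>
        simp [hatm, abs_neg, norm2_nonneg] <;> exact abs_le_norm2 y _
    have hentry : Lmat y k j =
        cfun (norm2 y) * (1 : Matrix (Fin 3) (Fin 3) ℝ) k j
          + ((1 - cfun (norm2 y)) / norm2 y ^ 2) * (y k * y j)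
          + (1/2) * hatm y k j := by
      rw [Lmat, if_neg h]
      simp [Matrix.add_apply, Matrix.smul_apply, vecMulVec_apply, smul_eq_mul]
    have h1kj : |(1 : Matrix (Fin 3) (Fin 3) ℝ) k j| ≤ 1 := by
      rw [Matrix.one_apply]; split_ifs <;> simp
    have hmid : |((1 - cfun (norm2 y)) / norm2 y ^ 2) * (y k * y j)| ≤ 1 + Mc := by
      rw [abs_mul, abs_div]
      have h2 : |1 - cfun (norm2 y)| / |norm2 y ^ 2| * |y k * y j|
          ≤ |1 - cfun (norm2 y)| / |norm2 y ^ 2| * (norm2 y ^ 2) :=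
        mul_le_mul_of_nonneg_left hykj (by positivity)
      refine le_trans h2 ?_
      rw [abs_of_pos hq, div_mul_cancel₀ _ (ne_of_gt hq)]
      calc |1 - cfun (norm2 y)| ≤ |(1:ℝ)| + |cfun (norm2 y)| := abs_sub _ _
        _ ≤ 1 + Mc := by simp [hc]
    calc |Lmat y k j| ≤ |cfun (norm2 y) * (1 : Matrix (Fin 3) (Fin 3) ℝ) k j|
          + |((1 - cfun (norm2 y)) / norm2 y ^ 2) * (y k * y j)| + |(1/2) * hatm y k j| := by
          rw [hentry]; exact le_trans (abs_add_le _ _) (by gcongr; exact abs_add_le _ _)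
      _ ≤ Mc * 1 + (1 + Mc) + (1/2) * norm2 y := by
          gcongr
          · rw [abs_mul]
            exact mul_le_mul hc h1kj (abs_nonneg _) (by linarith)
          · rw [abs_mul]
            calc |(1/2:ℝ)| * |hatm y k j| ≤ |(1/2:ℝ)| * norm2 y :=
                  mul_le_mul_of_nonneg_left hhat (abs_nonneg _)
              _ = (1/2) * norm2 y := by norm_num
      _ ≤ 2 * Mc + 1 + r := by nlinarith [norm2_nonneg y]

lemma Lmat_mulVec_bound (r Mc : ℝ) (hMc : 1 ≤ Mc)
    (hcb : ∀ θ, 0 ≤ θ → θ ≤ r → |cfun θ| ≤ Mc)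
    (y u : Fin 3 → ℝ) (hy : norm2 y ≤ r) (k : Fin 3) :
    |(Lmat y).mulVec u k| ≤ (2 * Mc + 1 + r) * ∑ j, |u j| := by
  rw [Matrix.mulVec, dotProduct]
  calc |∑ j, Lmat y k j * u j| ≤ ∑ j, |Lmat y k j * u j| := Finset.abs_sum_le_sum_abs _ _
    _ ≤ ∑ j, (2 * Mc + 1 + r) * |u j| := by
        refine Finset.sum_le_sum fun j _ => ?_
        rw [abs_mul]
        exact mul_le_mul_of_nonneg_right (Lmat_entry_bound r Mc hMc hcb y hy k j) (abs_nonneg _)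
    _ = (2 * Mc + 1 + r) * ∑ j, |u j| := by rw [Finset.mul_sum]

open MeasureTheory in
lemma ftc_lip {f φ : ℝ → ℝ} {a b K : ℝ} (hab : a ≤ b) (hK : 0 ≤ K)
    (hlip : ∀ u ∈ Set.Icc a (b+1), ∀ v ∈ Set.Icc a (b+1), |f u - f v| ≤ K * |u - v|)
    (hd : ∀ᵐ t ∂(volume : Measure ℝ), t ∈ Set.Ioo a b → HasDerivAt f (φ t) t) :
    f b - f a = ∫ t in Set.Ioo a b, φ t := by
  rcases eq_or_lt_of_le hab with rfl | hlt
  · simp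
  -- continuity of f on [a, b+1]
  have hcont : ContinuousOn f (Set.Icc a (b+1)) := by
    have : LipschitzOnWith (Real.toNNReal K) f (Set.Icc a (b+1)) := by
      rw [lipschitzOnWith_iff_dist_le_mul]
      intro u hu v hv
      rw [Real.dist_eq, Real.dist_eq]
      calc |f u - f v| ≤ K * |u - v| := hlip u hu v hv
        _ ≤ (Real.toNNReal K : ℝ) * |u - v| := by
            gcongr
            exact Real.le_coe_toNNReal K
    exact this.continuousOn
  set h : ℕ → ℝ := fun n => 1 / ((n:ℝ) + 1) with hh
  have hpos : ∀ n, 0 < h n := fun n => by positivity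
  have hle1 : ∀ n, h n ≤ 1 := fun n => by
    rw [hh]
    rw [div_le_one (by positivity)]
    simp
  have hmul : ∀ n, h n * ((n:ℝ) + 1) = 1 := fun n => by
    rw [hh]; field_simp
  set F : ℕ → ℝ → ℝ := fun n t => (f (t + h n) - f t) * ((n:ℝ) + 1) with hF
  -- integrability of f on subintervals of [a, b+1]
  have hsubint : ∀ u v, a ≤ u → v ≤ b + 1 → u ≤ v → IntervalIntegrable f volume u v := by
    intro u v hu hv huv
    apply (hcont.mono ?_).intervalIntegrable
    rw [Set.uIcc_of_le huv]
    exact Set.Icc_subset_Icc hu hv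
  -- the shifted function is continuous on Ioo a b
  have hshift : ∀ n, ContinuousOn (fun t => f (t + h n)) (Set.Icc a b) := by
    intro n
    apply hcont.comp (Continuous.continuousOn (by continuity))
    intro t ht
    simp only [Set.mem_Icc]
    constructor
    · linarith [ht.1, (hpos n).le]
    · linarith [ht.2, hle1 n]
  -- measurability
  have hmeas : ∀ n, AEStronglyMeasurable (F n) (volume.restrict (Set.Ioo a b)) := by
    intro n
    apply ContinuousOn.aestronglyMeasurable _ measurableSet_Ioo
    apply ContinuousOn.mul _ continuousOn_const
    apply ContinuousOn.sub
    · exact (hshift n).mono Set.Ioo_subset_Icc_self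
    · exact (hcont.mono (Set.Icc_subset_Icc le_rfl (by linarith))).mono Set.Ioo_subset_Icc_self
  -- uniform bound
  have hboundF : ∀ n, ∀ᵐ t ∂(volume.restrict (Set.Ioo a b)), ‖F n t‖ ≤ K := by
    intro n
    rw [ae_restrict_iff' measurableSet_Ioo]
    refine Filter.Eventually.of_forall fun t ht => ?_
    have h1 : |f (t + h n) - f t| ≤ K * |h n| := by
      have e1 : t + h n ∈ Set.Icc a (b+1) :=
        ⟨by linarith [ht.1.le, (hpos n).le], by linarith [ht.2.le, hle1 n]⟩
      have e2 : t ∈ Set.Icc a (b+1) := ⟨ht.1.le, by linarith [ht.2.le]⟩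
      have := hlip _ e1 _ e2
      simpa using this
    rw [hF]
    simp only [Real.norm_eq_abs, abs_mul]
    calc |f (t + h n) - f t| * |((n:ℝ)+1)| ≤ (K * |h n|) * |((n:ℝ)+1)| := by
          gcongr
      _ = K := by
          rw [abs_of_pos (hpos n), abs_of_pos (by positivity : (0:ℝ) < (n:ℝ)+1)]
          rw [mul_assoc, hmul n, mul_one]
  -- a.e. convergence to φ
  have hconv : ∀ᵐ t ∂(volume.restrict (Set.Ioo a b)),
      Filter.Tendsto (fun n => F n t) Filter.atTop (nhds (φ t)) := by
    rw [ae_restrict_iff' measurableSet_Ioo]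
    filter_upwards [hd] with t hdt ht
    have hder := hdt ht
    have hslope := hasDerivAt_iff_tendsto_slope.1 hder
    have hseq : Filter.Tendsto (fun n => t + h n) Filter.atTop (nhdsWithin t {t}ᶜ) := by
      rw [tendsto_nhdsWithin_iff]
      constructor
      · have : Filter.Tendsto (fun n => t + h n) Filter.atTop (nhds (t + 0)) :=
          tendsto_const_nhds.add tendsto_one_div_add_atTop_nhds_zero_nat
        simpa using this
      · exact Filter.Eventually.of_forall fun n => by
          simp only [Set.mem_compl_iff, Set.mem_singleton_iff]
          have := hpos n
          intro hcontra
          linarith [hcontra ▸ (by linarith : t < t + h n)]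
    have := hslope.comp hseq
    refine this.congr fun n => ?_
    rw [hF]
    simp only [Function.comp_apply, slope_def_field, add_sub_cancel_left, hh]
    rw [div_eq_mul_inv, one_div, inv_inv]
  -- DCT
  have hdct := MeasureTheory.tendsto_integral_of_dominated_convergence (fun _ => K)
    hmeas (integrableOn_const (by rw [Real.volume_Ioo]; exact ENNReal.ofReal_ne_top))
    hboundF hconv
  -- compute ∫ F n
  have hcompute : ∀ n, ∫ t in Set.Ioo a b, F n t
      = ((∫ u in b..(b + h n), f u) - ∫ u in a..(a + h n), f u) * ((n:ℝ) + 1) := by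
    intro n
    have e0 : ∫ t in Set.Ioo a b, F n t = ∫ t in a..b, F n t := by
      rw [intervalIntegral.integral_of_le hab, MeasureTheory.integral_Ioc_eq_integral_Ioo]
    rw [e0, hF]
    have i1 : IntervalIntegrable (fun t => f (t + h n)) volume a b := by
      apply ((hshift n).mono ?_).intervalIntegrable
      rw [Set.uIcc_of_le hab]
    have i2 : IntervalIntegrable f volume a b := hsubint a b le_rfl (by linarith) hab
    rw [intervalIntegral.integral_mul_const, intervalIntegral.integral_sub i1 i2]
    congr 1
    have e1 : (∫ t in a..b, f (t + h n)) = ∫ u in (a + h n)..(b + h n), f u :=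
      intervalIntegral.integral_comp_add_right f (h n)
    have i3 : IntervalIntegrable f volume a (a + h n) :=
      hsubint _ _ le_rfl (by linarith [hle1 n, (hpos n).le]) (by linarith [(hpos n).le])
    have i4 : IntervalIntegrable f volume (a + h n) (b + h n) :=
      hsubint _ _ (by linarith [(hpos n).le]) (by linarith [hle1 n]) (by linarith)
    have i5 : IntervalIntegrable f volume b (b + h n) :=
      hsubint _ _ (by linarith) (by linarith [hle1 n]) (by linarith [(hpos n).le])
    have a1 : (∫ u in a..(a + h n), f u) + ∫ u in (a + h n)..(b + h n), f u
        = ∫ u in a..(b + h n), f u := intervalIntegral.integral_add_adjacent_intervals i3 i4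
    have a2 : (∫ u in a..b, f u) + ∫ u in b..(b + h n), f u
        = ∫ u in a..(b + h n), f u := intervalIntegral.integral_add_adjacent_intervals i2 i5
    rw [e1]
    linarith [a1, a2]
  -- endpoint limits
  have hend : ∀ c : ℝ, a ≤ c → c ≤ b →
      Filter.Tendsto (fun n => (∫ u in c..(c + h n), f u) * ((n:ℝ) + 1))
        Filter.atTop (nhds (f c)) := by
    intro c hac hcb
    rw [← tendsto_sub_nhds_zero_iff]
    refine squeeze_zero_norm (a := fun n => K * h n) ?_ ?_
    · intro n
      have hcc : c ∈ Set.Icc a (b+1) := ⟨hac, by linarith⟩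
      have key : (∫ u in c..(c + h n), f u) - f c * h n = ∫ u in c..(c + h n), (f u - f c) := by
        rw [intervalIntegral.integral_sub (hsubint _ _ hac (by linarith [hle1 n]) (by linarith [(hpos n).le])) intervalIntegrable_const]
        simp [mul_comm]
      have hbnd : ‖∫ u in c..(c + h n), (f u - f c)‖ ≤ (K * h n) * |(c + h n) - c| := by
        apply intervalIntegral.norm_integral_le_of_norm_le_const
        intro u hu
        rw [Set.uIoc_of_le (by linarith [(hpos n).le])] at hu
        have hu1 : u ∈ Set.Icc a (b+1) := ⟨by linarith [hu.1.le], by linarith [hu.2, hle1 n]⟩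
        have habs : |u - c| ≤ h n := by
          rw [abs_of_nonneg (by linarith [hu.1.le] : (0:ℝ) ≤ u - c)]
          linarith [hu.2]
        calc |f u - f c| ≤ K * |u - c| := hlip u hu1 c hcc
          _ ≤ K * h n := mul_le_mul_of_nonneg_left habs hK
      have e2 : (∫ u in c..(c + h n), f u) * ((n:ℝ)+1) - f c
          = ((∫ u in c..(c + h n), f u) - f c * h n) * ((n:ℝ)+1) := by
        rw [sub_mul, mul_assoc, hmul n, mul_one]
      rw [e2, key]
      rw [norm_mul]
      calc ‖∫ u in c..(c + h n), (f u - f c)‖ * ‖((n:ℝ)+1)‖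
          ≤ ((K * h n) * |(c + h n) - c|) * ‖((n:ℝ)+1)‖ := by gcongr
        _ = K * h n := by
            rw [Real.norm_eq_abs, abs_of_pos (by positivity : (0:ℝ) < (n:ℝ)+1),
              show c + h n - c = h n by ring, abs_of_pos (hpos n),
              mul_assoc (K * h n), hmul n, mul_one]
    · have : Filter.Tendsto (fun n => K * h n) Filter.atTop (nhds (K * 0)) :=
        tendsto_const_nhds.mul tendsto_one_div_add_atTop_nhds_zero_nat
      simpa using this
  -- combine
  have hlim2 : Filter.Tendsto (fun n => ∫ t in Set.Ioo a b, F n t) Filter.atTop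
      (nhds (f b - f a)) := by
    have := ((hend b hab le_rfl).sub (hend a le_rfl hab))
    refine Filter.Tendsto.congr (fun n => ?_) this
    rw [hcompute n]
    ring
  exact (tendsto_nhds_unique hdct hlim2).symm

lemma incidence_sum {n mm : ℕ} (te he : Fin mm → Fin n) (hloop : ∀ e, te e ≠ he e)
    (B : Matrix (Fin n) (Fin mm) ℝ)
    (hB : ∀ i e, B i e = if i = te e then 1 else if i = he e then -1 else 0)
    (y : Fin n → ℝ) (e : Fin mm) :
    ∑ i, B i e * y i = y (te e) - y (he e) := by
  have key : ∀ i, B i e * y i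
      = (if i = te e then y i else 0) + (if i = he e then -y i else 0) := by
    intro i
    rw [hB i e]
    by_cases h1 : i = te e
    · rw [if_pos h1, if_pos h1, if_neg (by rw [h1]; exact hloop e), add_zero, one_mul]
    · rw [if_neg h1, if_neg h1, zero_add]
      by_cases h2 : i = he e
      · rw [if_pos h2, if_pos h2]; ring
      · rw [if_neg h2, if_neg h2, zero_mul]
  rw [Finset.sum_congr rfl (fun i _ => key i), Finset.sum_add_distrib,
    Finset.sum_ite_eq', Finset.sum_ite_eq']
  simp [sub_eq_add_neg]

lemma walk_bound {n mm : ℕ} {te he : Fin mm → Fin n} (hloop : ∀ e, te e ≠ he e)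
    {B : Matrix (Fin n) (Fin mm) ℝ}
    (hB : ∀ i e, B i e = if i = te e then 1 else if i = he e then -1 else 0)
    (y : Fin n → Fin 3 → ℝ) (g : ℝ)
    (hg : ∀ e k, |∑ i, B i e * y i k| ≤ g)
    {i j : Fin n}
    (w : (SimpleGraph.fromRel (fun i j => ∃ e, te e = i ∧ he e = j)).Walk i j)
    (k : Fin 3) :
    |y i k - y j k| ≤ w.length * g := by
  induction w with
  | nil => simp
  | @cons i b j hadj p ih =>
    have hstep : |y i k - y b k| ≤ g := by
      rw [SimpleGraph.fromRel_adj] at hadj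
      rcases hadj.2 with ⟨e, h1, h2⟩ | ⟨e, h1, h2⟩
      · have := hg e k
        rwa [incidence_sum te he hloop B hB (fun i' => y i' k) e, h1, h2] at this
      · have := hg e k
        rw [incidence_sum te he hloop B hB (fun i' => y i' k) e, h1, h2] at this
        rwa [abs_sub_comm] at this
    have hg0 : 0 ≤ g := le_trans (abs_nonneg _) hstep
    calc |y i k - y j k| = |(y i k - y b k) + (y b k - y j k)| := by ring_nf
      _ ≤ |y i k - y b k| + |y b k - y j k| := abs_add_le _ _
      _ ≤ g + p.length * g := add_le_add hstep ih
      _ = (p.cons hadj).length * g := by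
          rw [SimpleGraph.Walk.length_cons]
          push_cast
          ring

open MeasureTheory Filter in
/-- asymptotic consensus.  Under the hypotheses of the invariance
lemma, the solution converges to the consensus space: dist(x(t), 𝒞) → 0. -/
theorem asymptotic_consensus {n m : ℕ}
    (te he : Fin m → Fin n) (hloop : ∀ e, te e ≠ he e)
    (hconn : (SimpleGraph.fromRel (fun i j => ∃ e, te e = i ∧ he e = j)).Connected)
    (B : Matrix (Fin n) (Fin m) ℝ)
    (hB : ∀ i e, B i e = if i = te e then 1 else if i = he e then -1 else 0)
    (C : ℝ) (hC0 : 0 < C) (hC : C < 4 * Real.pi ^ 2)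
    (x : ℝ → Fin n → Fin 3 → ℝ)
    (hlip : ∀ a b : ℝ, 0 ≤ a → ∃ K : NNReal, LipschitzOnWith K x (Set.Icc a b))
    (h0 : ∑ i, norm2 (x 0 i) ^ 2 < C)
    (hdyn : ∀ᵐ t ∂(volume : Measure ℝ), 0 ≤ t →
      ∃ s : Fin m → Fin 3 → ℝ,
        SignSelV s (fun e k => ∑ i, B i e * x t i k) ∧
        HasDerivAt x (fun i => -(Lmat (x t i)).mulVec (∑ e, B i e • s e)) t) :
    Tendsto (fun t => distToConsensus (x t)) atTop (nhds 0) := by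
  classical
  haveI : Nonempty (Fin n) := hconn.nonempty
  set z : ℝ → Fin m → Fin 3 → ℝ := fun t e k => ∑ i, B i e * x t i k with hzdef
  set g : ℝ → ℝ := fun t => ∑ e, ∑ k, |z t e k| with hgdef
  set V : ℝ → ℝ := fun t => ∑ i, ∑ k, x t i k ^ 2 with hVdef
  have hg0 : ∀ t, 0 ≤ g t := fun t =>
    Finset.sum_nonneg fun e _ => Finset.sum_nonneg fun k _ => abs_nonneg _
  have hV0 : ∀ t, 0 ≤ V t := fun t =>
    Finset.sum_nonneg fun i _ => Finset.sum_nonneg fun k _ => sq_nonneg _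
  have hV0C : V 0 < C := by
    have : V 0 = ∑ i, norm2 (x 0 i) ^ 2 :=
      Finset.sum_congr rfl fun i _ => (norm2_sq (x 0 i)).symm
    rw [this]; exact h0
  -- z single bound by g
  have hzg : ∀ t e k, |z t e k| ≤ g t := by
    intro t e k
    calc |z t e k| ≤ ∑ k', |z t e k'| :=
          Finset.single_le_sum (f := fun k' => |z t e k'|)
            (fun k' _ => abs_nonneg _) (Finset.mem_univ k)
      _ ≤ g t := Finset.single_le_sum
          (f := fun e' => ∑ k', |z t e' k'|)
          (fun e' _ => Finset.sum_nonneg fun k' _ => abs_nonneg _) (Finset.mem_univ e)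
  -- STEP 1 : a.e. derivative of V
  have hVd : ∀ᵐ t ∂(volume : Measure ℝ), 0 ≤ t → HasDerivAt V (-2 * g t) t := by
    filter_upwards [hdyn] with t ht h0t
    obtain ⟨s, hsel, hx⟩ := ht h0t
    have hcoord : ∀ i k, HasDerivAt (fun u => x u i k)
        ((-(Lmat (x t i)).mulVec (∑ e, B i e • s e)) k) t := by
      intro i k
      exact hasDerivAt_pi.1 (hasDerivAt_pi.1 hx i) k
    have hsum : HasDerivAt V
        (∑ i, ∑ k, (2:ℝ) * x t i k ^ 1 * ((-(Lmat (x t i)).mulVec (∑ e, B i e • s e)) k)) t := by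
      apply HasDerivAt.fun_sum
      intro i _
      apply HasDerivAt.fun_sum
      intro k _
      simpa using (hcoord i k).fun_pow 2
    convert hsum using 1
    -- algebra : the sum equals -2 * g t
    have e1 : ∀ i, ∑ k, (2:ℝ) * x t i k ^ 1 * ((-(Lmat (x t i)).mulVec (∑ e, B i e • s e)) k)
        = -2 * ∑ k, x t i k * ((Lmat (x t i)).mulVec (∑ e, B i e • s e)) k := by
      intro i
      rw [Finset.mul_sum]
      refine Finset.sum_congr rfl fun k _ => ?_
      simp only [Pi.neg_apply, pow_one]
      ring
    have e2 : ∀ i, ∑ k, x t i k * ((Lmat (x t i)).mulVec (∑ e, B i e • s e)) k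
        = ∑ k, x t i k * ∑ e, B i e * s e k := by
      intro i
      rw [xLx]
      refine Finset.sum_congr rfl fun k _ => ?_
      congr 1
      rw [Finset.sum_apply]
      exact Finset.sum_congr rfl fun e _ => rfl
    have e3 : ∑ i, ∑ k, x t i k * ∑ e, B i e * s e k = ∑ e, ∑ k, z t e k * s e k := by
      have lhs : ∑ i, ∑ k, x t i k * ∑ e, B i e * s e k
          = ∑ i, ∑ k, ∑ e, x t i k * (B i e * s e k) := by
        refine Finset.sum_congr rfl fun i _ => Finset.sum_congr rfl fun k _ => ?_
        rw [Finset.mul_sum]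
      have rhs : ∑ e, ∑ k, z t e k * s e k
          = ∑ e, ∑ k, ∑ i, x t i k * (B i e * s e k) := by
        refine Finset.sum_congr rfl fun e _ => Finset.sum_congr rfl fun k _ => ?_
        rw [hzdef]
        rw [Finset.sum_mul]
        exact Finset.sum_congr rfl fun i _ => by ring
      rw [lhs, rhs]
      rw [show (∑ i : Fin n, ∑ k : Fin 3, ∑ e : Fin m, x t i k * (B i e * s e k))
          = ∑ i : Fin n, ∑ e : Fin m, ∑ k : Fin 3, x t i k * (B i e * s e k) from
        Finset.sum_congr rfl fun i _ => Finset.sum_comm, Finset.sum_comm]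
      exact Finset.sum_congr rfl fun e _ => Finset.sum_comm
    have e4 : ∑ e, ∑ k, z t e k * s e k = g t := by
      rw [hgdef]
      refine Finset.sum_congr rfl fun e _ => Finset.sum_congr rfl fun k _ => ?_
      exact mul_sign_sel _ _ (hsel e k).1 (hsel e k).2
    calc -2 * g t = -2 * ∑ e, ∑ k, z t e k * s e k := by rw [e4]
      _ = -2 * ∑ i, ∑ k, x t i k * ∑ e, B i e * s e k := by rw [e3]
      _ = ∑ i, -2 * ∑ k, x t i k * ∑ e, B i e * s e k := by rw [Finset.mul_sum]
      _ = ∑ i, ∑ k, (2:ℝ) * x t i k ^ 1 * ((-(Lmat (x t i)).mulVec (∑ e, B i e • s e)) k) := by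
          refine Finset.sum_congr rfl fun i _ => ?_
          rw [e1 i, e2 i]
  -- STEP 2 : coordinate Lipschitz estimates on compact time intervals
  have hco : ∀ b : ℝ, 0 ≤ b → ∃ K : ℝ, 0 ≤ K ∧
      ∀ u ∈ Set.Icc (0:ℝ) b, ∀ v ∈ Set.Icc (0:ℝ) b, ∀ i k,
        |x u i k - x v i k| ≤ K * |u - v| := by
    intro b hb
    obtain ⟨K, hK⟩ := hlip 0 b le_rfl
    refine ⟨K, K.2, fun u hu v hv i k => ?_⟩
    have h1 : dist (x u) (x v) ≤ (K:ℝ) * dist u v := hK.dist_le_mul u hu v hv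
    have h2 : dist (x u i k) (x v i k) ≤ dist (x u) (x v) :=
      le_trans (dist_le_pi_dist (x u i) (x v i) k) (dist_le_pi_dist (x u) (x v) i)
    rw [Real.dist_eq] at h1
    rw [Real.dist_eq] at h2
    linarith
  -- fundamental theorem of calculus for V
  have hVftc : ∀ t1 t2 : ℝ, 0 ≤ t1 → t1 ≤ t2 →
      V t2 - V t1 = ∫ u in Set.Ioo t1 t2, (-2 * g u) := by
    intro t1 t2 h1 h12
    obtain ⟨K, hKn, hK⟩ := hco (t2+1) (by linarith)
    -- bound on coordinates on [0, t2+1]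
    set R : ℝ := (∑ i, ∑ k, |x 0 i k|) + K * (t2+1) + 1 with hR
    have hRpos : 0 < R := by
      have : (0:ℝ) ≤ ∑ i, ∑ k, |x 0 i k| :=
        Finset.sum_nonneg fun i _ => Finset.sum_nonneg fun k _ => abs_nonneg _
      nlinarith
    have hRx : ∀ u ∈ Set.Icc (0:ℝ) (t2+1), ∀ i k, |x u i k| ≤ R := by
      intro u hu i k
      have h2 := hK u hu 0 ⟨le_rfl, by linarith⟩ i k
      have h3 : |x 0 i k| ≤ ∑ i', ∑ k', |x 0 i' k'| := by
        calc |x 0 i k| ≤ ∑ k', |x 0 i k'| :=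
              Finset.single_le_sum (f := fun k' => |x 0 i k'|)
                (fun k' _ => abs_nonneg _) (Finset.mem_univ k)
          _ ≤ ∑ i', ∑ k', |x 0 i' k'| :=
              Finset.single_le_sum (f := fun i' => ∑ k', |x 0 i' k'|)
                (fun i' _ => Finset.sum_nonneg fun k' _ => abs_nonneg _) (Finset.mem_univ i)
      have h4 : |u - 0| ≤ t2 + 1 := by
        rw [sub_zero, abs_of_nonneg hu.1]; exact hu.2
      calc |x u i k| = |x 0 i k + (x u i k - x 0 i k)| := by ring_nf
        _ ≤ |x 0 i k| + |x u i k - x 0 i k| := abs_add_le _ _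
        _ ≤ (∑ i', ∑ k', |x 0 i' k'|) + K * (t2+1) := by
            refine add_le_add h3 (le_trans h2 ?_)
            exact mul_le_mul_of_nonneg_left h4 hKn
        _ ≤ R := by rw [hR]; linarith
    -- Lipschitz bound for V on [0, t2+1]
    have hVlip : ∀ u ∈ Set.Icc (0:ℝ) (t2+1), ∀ v ∈ Set.Icc (0:ℝ) (t2+1),
        |V u - V v| ≤ ((n:ℝ) * 3 * (2 * R * K)) * |u - v| := by
      intro u hu v hv
      have hdiff : V u - V v = ∑ i, ∑ k, (x u i k ^ 2 - x v i k ^ 2) := by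
        rw [hVdef]
        rw [← Finset.sum_sub_distrib]
        exact Finset.sum_congr rfl fun i _ => (Finset.sum_sub_distrib _ _).symm
      rw [hdiff]
      calc |∑ i, ∑ k, (x u i k ^ 2 - x v i k ^ 2)|
          ≤ ∑ i, |∑ k, (x u i k ^ 2 - x v i k ^ 2)| := Finset.abs_sum_le_sum_abs _ _
        _ ≤ ∑ i, ∑ k, |x u i k ^ 2 - x v i k ^ 2| :=
            Finset.sum_le_sum fun i _ => Finset.abs_sum_le_sum_abs _ _
        _ ≤ ∑ i : Fin n, ∑ k : Fin 3, (2 * R * K) * |u - v| := by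
            refine Finset.sum_le_sum fun i _ => Finset.sum_le_sum fun k _ => ?_
            have e : x u i k ^ 2 - x v i k ^ 2
                = (x u i k + x v i k) * (x u i k - x v i k) := by ring
            rw [e, abs_mul]
            have b1 : |x u i k + x v i k| ≤ 2 * R := by
              calc |x u i k + x v i k| ≤ |x u i k| + |x v i k| := abs_add_le _ _
                _ ≤ 2 * R := by linarith [hRx u hu i k, hRx v hv i k]
            have b2 : |x u i k - x v i k| ≤ K * |u - v| := hK u hu v hv i k
            calc |x u i k + x v i k| * |x u i k - x v i k|
                ≤ (2 * R) * (K * |u - v|) := by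
                  exact mul_le_mul b1 b2 (abs_nonneg _) (by linarith)
              _ = (2 * R * K) * |u - v| := by ring
        _ = ((n:ℝ) * 3 * (2 * R * K)) * |u - v| := by
            rw [Finset.sum_const, Finset.sum_const]
            simp [Finset.card_univ]
            ring
    refine ftc_lip (K := (n:ℝ) * 3 * (2 * R * K)) h12 (by positivity) ?_ ?_
    · intro u hu v hv
      have hsub : Set.Icc t1 (t2+1) ⊆ Set.Icc (0:ℝ) (t2+1) :=
        Set.Icc_subset_Icc h1 le_rfl
      exact hVlip u (hsub hu) v (hsub hv)
    · filter_upwards [hVd] with u hu hmem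
      exact hu (by linarith [hmem.1])
  -- V is nonincreasing
  have hVmono : ∀ t1 t2 : ℝ, 0 ≤ t1 → t1 ≤ t2 → V t2 ≤ V t1 := by
    intro t1 t2 h1 h12
    have heq := hVftc t1 t2 h1 h12
    have hpos : 0 ≤ ∫ u in Set.Ioo t1 t2, g u :=
      setIntegral_nonneg measurableSet_Ioo fun u _ => hg0 u
    have : ∫ u in Set.Ioo t1 t2, (-2 * g u) = -2 * ∫ u in Set.Ioo t1 t2, g u :=
      integral_const_mul _ _
    rw [this] at heq
    linarith
  -- invariance : norm2 bound
  have hxtC : ∀ t, 0 ≤ t → ∀ i, norm2 (x t i) ≤ Real.sqrt C := by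
    intro t ht i
    have h1 : ∑ k, x t i k ^ 2 ≤ V t :=
      Finset.single_le_sum (f := fun i' => ∑ k, x t i' k ^ 2)
        (fun i' _ => Finset.sum_nonneg fun k _ => sq_nonneg _) (Finset.mem_univ i)
    have h2 : V t ≤ V 0 := hVmono 0 t le_rfl ht
    rw [norm2]
    exact Real.sqrt_le_sqrt (by linarith)
  -- STEP 3 : uniform derivative bound
  set r : ℝ := Real.sqrt C with hrdef
  have hr0 : 0 ≤ r := Real.sqrt_nonneg C
  have hrlt : r < 2 * Real.pi := by
    have h4 : C < (2*Real.pi)^2 := by nlinarith [Real.pi_pos]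
    calc r < Real.sqrt ((2*Real.pi)^2) := Real.sqrt_lt_sqrt hC0.le h4
      _ = 2*Real.pi := Real.sqrt_sq (by positivity)
  have hcontabs : ContinuousOn (fun θ => |cfun θ|) (Set.Icc 0 r) :=
    fun θ hθ => ((cfun_continuousAt θ hθ.1 (lt_of_le_of_lt hθ.2 hrlt)).abs).continuousWithinAt
  obtain ⟨θ0, hθ0, hθmax'⟩ := isCompact_Icc.exists_isMaxOn (Set.nonempty_Icc.2 hr0) hcontabs
  have hθmax : ∀ θ ∈ Set.Icc 0 r, |cfun θ| ≤ |cfun θ0| := fun θ hθ => hθmax' hθ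
  set Mc : ℝ := max (|cfun θ0|) 1 with hMcdef
  have hMc1 : 1 ≤ Mc := le_max_right _ _
  have hcb : ∀ θ, 0 ≤ θ → θ ≤ r → |cfun θ| ≤ Mc :=
    fun θ ha hb => le_trans (hθmax θ ⟨ha, hb⟩) (le_max_left _ _)
  set ML : ℝ := 2 * Mc + 1 + r with hMLdef
  set Mv : ℝ := ML * (3 * m) with hMvdef
  have hML0 : 0 ≤ ML := by rw [hMLdef]; linarith
  have hMv0 : 0 ≤ Mv := by rw [hMvdef]; positivity
  -- a.e. bound on coordinate derivatives
  have hcd : ∀ᵐ t ∂(volume : Measure ℝ), 0 ≤ t → ∀ i k,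
      HasDerivAt (fun u => x u i k) (deriv (fun u => x u i k) t) t ∧
      |deriv (fun u => x u i k) t| ≤ Mv := by
    filter_upwards [hdyn] with t ht h0t
    intro i k
    obtain ⟨s, hsel, hx⟩ := ht h0t
    have hcoord : HasDerivAt (fun u => x u i k)
        ((-(Lmat (x t i)).mulVec (∑ e, B i e • s e)) k) t :=
      hasDerivAt_pi.1 (hasDerivAt_pi.1 hx i) k
    have hdval := hcoord.deriv
    refine ⟨hdval ▸ hcoord, ?_⟩
    rw [hdval]
    have husum : ∑ j, |(∑ e, B i e • s e) j| ≤ 3 * m := by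
      have hone : ∀ j : Fin 3, |(∑ e, B i e • s e) j| ≤ m := by
        intro j
        rw [Finset.sum_apply]
        calc |∑ e, (B i e • s e) j| ≤ ∑ e, |(B i e • s e) j| := Finset.abs_sum_le_sum_abs _ _
          _ ≤ ∑ e : Fin m, (1:ℝ) := by
              refine Finset.sum_le_sum fun e _ => ?_
              rw [Pi.smul_apply, smul_eq_mul, abs_mul]
              have hB1 : |B i e| ≤ 1 := by
                rw [hB i e]; split_ifs <;> norm_num
              have hs1 : |s e j| ≤ 1 := abs_le.2 ⟨(hsel e j).1.1, (hsel e j).1.2⟩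
              calc |B i e| * |s e j| ≤ 1 * 1 :=
                    mul_le_mul hB1 hs1 (abs_nonneg _) zero_le_one
                _ = 1 := by ring
          _ = m := by simp
      calc ∑ j, |(∑ e, B i e • s e) j| ≤ ∑ j : Fin 3, (m:ℝ) :=
            Finset.sum_le_sum fun j _ => hone j
        _ = 3 * m := by simp [mul_comm]
    have hmv := Lmat_mulVec_bound r Mc hMc1 hcb (x t i) (∑ e, B i e • s e)
      (hxtC t h0t i) k
    rw [Pi.neg_apply, abs_neg]
    calc |(Lmat (x t i)).mulVec (∑ e, B i e • s e) k|
        ≤ (2 * Mc + 1 + r) * ∑ j, |(∑ e, B i e • s e) j| := hmv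
      _ ≤ ML * (3 * m) := by
          rw [hMLdef]
          exact mul_le_mul_of_nonneg_left husum (by linarith)
      _ = Mv := hMvdef.symm
  -- uniform Lipschitz bound for coordinates on [0, ∞)
  have hclip : ∀ t1 t2 : ℝ, 0 ≤ t1 → t1 ≤ t2 → ∀ i k,
      |x t2 i k - x t1 i k| ≤ Mv * (t2 - t1) := by
    intro t1 t2 h1 h12 i k
    obtain ⟨K, hKn, hK⟩ := hco (t2+1) (by linarith)
    have heq : x t2 i k - x t1 i k
        = ∫ u in Set.Ioo t1 t2, deriv (fun u' => x u' i k) u := by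
      refine ftc_lip (f := fun u => x u i k)
        (φ := fun u => deriv (fun u' => x u' i k) u) (K := K) h12 hKn ?_ ?_
      · intro u hu v hv
        have hsub : Set.Icc t1 (t2+1) ⊆ Set.Icc (0:ℝ) (t2+1) :=
          Set.Icc_subset_Icc h1 le_rfl
        exact hK u (hsub hu) v (hsub hv) i k
      · filter_upwards [hcd] with u hu hmem
        exact (hu (by linarith [hmem.1]) i k).1
    have hbb : ‖∫ u in Set.Ioo t1 t2, deriv (fun u' => x u' i k) u‖
        ≤ ∫ u in Set.Ioo t1 t2, Mv := by
      refine norm_integral_le_of_norm_le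
        (integrableOn_const (by rw [Real.volume_Ioo]; exact ENNReal.ofReal_ne_top)) ?_
      filter_upwards [ae_restrict_of_ae hcd, ae_restrict_mem measurableSet_Ioo] with u hu humem
      rw [Real.norm_eq_abs]
      exact (hu (by linarith [h1, humem.1]) i k).2
    have hcon : ∫ u in Set.Ioo t1 t2, (Mv:ℝ) = Mv * (t2 - t1) := by
      rw [setIntegral_const, Real.volume_real_Ioo_of_le (by linarith), smul_eq_mul]
      ring
    rw [hcon] at hbb
    calc |x t2 i k - x t1 i k| = ‖x t2 i k - x t1 i k‖ := rfl
      _ = ‖∫ u in Set.Ioo t1 t2, deriv (fun u' => x u' i k) u‖ := by rw [heq]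
      _ ≤ Mv * (t2 - t1) := hbb
  -- uniform Lipschitz bound for g on [0, ∞)
  set Kg : ℝ := (m:ℝ) * (3 * ((n:ℝ) * Mv)) with hKgdef
  have hKg0 : 0 ≤ Kg := by rw [hKgdef]; positivity
  have hglip : ∀ t1 t2 : ℝ, 0 ≤ t1 → t1 ≤ t2 → |g t2 - g t1| ≤ Kg * (t2 - t1) := by
    intro t1 t2 h1 h12
    have hdiff : g t2 - g t1 = ∑ e, ∑ k, (|z t2 e k| - |z t1 e k|) := by
      rw [hgdef, ← Finset.sum_sub_distrib]
      exact Finset.sum_congr rfl fun e _ => (Finset.sum_sub_distrib _ _).symm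
    rw [hdiff]
    calc |∑ e, ∑ k, (|z t2 e k| - |z t1 e k|)|
        ≤ ∑ e, |∑ k, (|z t2 e k| - |z t1 e k|)| := Finset.abs_sum_le_sum_abs _ _
      _ ≤ ∑ e, ∑ k, |(|z t2 e k| - |z t1 e k|)| :=
          Finset.sum_le_sum fun e _ => Finset.abs_sum_le_sum_abs _ _
      _ ≤ ∑ e : Fin m, ∑ k : Fin 3, ((n:ℝ) * Mv) * (t2 - t1) := by
          refine Finset.sum_le_sum fun e _ => Finset.sum_le_sum fun k _ => ?_
          refine le_trans (abs_abs_sub_abs_le_abs_sub _ _) ?_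
          have hzz : z t2 e k - z t1 e k = ∑ i, B i e * (x t2 i k - x t1 i k) := by
            rw [hzdef, ← Finset.sum_sub_distrib]
            exact Finset.sum_congr rfl fun i _ => by ring
          rw [hzz]
          calc |∑ i, B i e * (x t2 i k - x t1 i k)|
              ≤ ∑ i, |B i e * (x t2 i k - x t1 i k)| := Finset.abs_sum_le_sum_abs _ _
            _ ≤ ∑ i : Fin n, Mv * (t2 - t1) := by
                refine Finset.sum_le_sum fun i _ => ?_
                rw [abs_mul]
                have hB1 : |B i e| ≤ 1 := by rw [hB i e]; split_ifs <;> norm_num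
                calc |B i e| * |x t2 i k - x t1 i k| ≤ 1 * (Mv * (t2 - t1)) := by
                      refine mul_le_mul hB1 (hclip t1 t2 h1 h12 i k) (abs_nonneg _) zero_le_one
                  _ = Mv * (t2 - t1) := by ring
            _ = ((n:ℝ) * Mv) * (t2 - t1) := by
                rw [Finset.sum_const, Finset.card_univ]
                simp [nsmul_eq_mul]
                try ring
      _ = Kg * (t2 - t1) := by
          rw [Finset.sum_const, Finset.sum_const, hKgdef]
          simp [Finset.card_univ]
          try ring
  -- continuity of g on [0, ∞)
  have hgcont : ContinuousOn g (Set.Ici 0) := by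
    have : LipschitzOnWith (Real.toNNReal Kg) g (Set.Ici 0) := by
      rw [lipschitzOnWith_iff_dist_le_mul]
      intro u hu v hv
      rw [Real.dist_eq, Real.dist_eq]
      rcases le_total v u with huv | huv
      · calc |g u - g v| ≤ Kg * (u - v) := hglip v u hv huv
          _ ≤ (Real.toNNReal Kg : ℝ) * |u - v| := by
              rw [abs_of_nonneg (by linarith)]
              exact mul_le_mul_of_nonneg_right (Real.le_coe_toNNReal Kg) (by linarith)
      · rw [abs_sub_comm]
        calc |g v - g u| ≤ Kg * (v - u) := hglip u v hu huv
          _ ≤ (Real.toNNReal Kg : ℝ) * |u - v| := by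
              rw [abs_sub_comm, abs_of_nonneg (by linarith)]
              exact mul_le_mul_of_nonneg_right (Real.le_coe_toNNReal Kg) (by linarith)
    exact this.continuousOn
  -- STEP 4 : Barbalat : g → 0
  have hgto : Tendsto g atTop (nhds 0) := by
    rw [Metric.tendsto_atTop]
    by_contra hcon
    push_neg at hcon
    obtain ⟨ε, hε, hbad⟩ := hcon
    set δ : ℝ := ε / (2 * (Kg + 1)) with hδdef
    have hδ0 : 0 < δ := by rw [hδdef]; positivity
    have hδK : Kg * δ ≤ ε / 2 := by
      have h1 : δ * (2 * (Kg + 1)) = ε := by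
        rw [hδdef]
        exact div_mul_cancel₀ _ (by positivity)
      nlinarith [hδ0.le, hKg0]
    have hdrop : ∀ t0 : ℝ, 0 ≤ t0 → ε ≤ g t0 → V (t0 + δ) ≤ V t0 - ε * δ := by
      intro t0 h00 hgt
      have hlow : ∀ u ∈ Set.Ioo t0 (t0 + δ), ε / 2 ≤ g u := by
        intro u hu
        have h1 := hglip t0 u h00 hu.1.le
        have h2 : Kg * (u - t0) ≤ Kg * δ :=
          mul_le_mul_of_nonneg_left (by linarith [hu.2]) hKg0
        have h3 : g t0 - g u ≤ Kg * (u - t0) := by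
          have := abs_le.1 h1
          linarith [this.2]
        linarith
      have hgint : IntegrableOn g (Set.Ioo t0 (t0 + δ)) := by
        refine ((hgcont.mono ?_).integrableOn_Icc).mono_set Set.Ioo_subset_Icc_self
        intro u hu
        exact le_trans h00 hu.1
      have hint : (ε/2) * δ ≤ ∫ u in Set.Ioo t0 (t0 + δ), g u := by
        have hconst : ∫ u in Set.Ioo t0 (t0 + δ), (ε/2 : ℝ) = (ε/2) * δ := by
          rw [setIntegral_const, Real.volume_real_Ioo_of_le (by linarith), smul_eq_mul]
          ring
        rw [← hconst]
        refine setIntegral_mono_on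
          (integrableOn_const (by rw [Real.volume_Ioo]; exact ENNReal.ofReal_ne_top))
          hgint measurableSet_Ioo (fun u hu => hlow u hu)
      have heq := hVftc t0 (t0 + δ) h00 (by linarith)
      rw [integral_const_mul] at heq
      linarith
    have hstep : ∀ j : ℕ, ∃ T : ℝ, 0 ≤ T ∧ V T ≤ V 0 - j * (ε * δ) := by
      intro j
      induction j with
      | zero => exact ⟨0, le_rfl, by simp⟩
      | succ j ih =>
        obtain ⟨T, hT0, hTV⟩ := ih
        obtain ⟨t, ht, hgt⟩ := hbad (max T 0)
        have ht0 : 0 ≤ t := le_trans (le_max_right T 0) ht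
        have htT : T ≤ t := le_trans (le_max_left T 0) ht
        have hgε : ε ≤ g t := by
          rw [Real.dist_eq, sub_zero, abs_of_nonneg (hg0 t)] at hgt
          exact hgt
        refine ⟨t + δ, by linarith, ?_⟩
        have h1 := hdrop t ht0 hgε
        have h2 := hVmono T t hT0 htT
        push_cast
        linarith
    obtain ⟨j, hj⟩ := exists_nat_gt (V 0 / (ε * δ))
    obtain ⟨T, hT0, hTV⟩ := hstep j
    have hmul : V 0 / (ε * δ) * (ε * δ) < (j:ℝ) * (ε * δ) :=
      mul_lt_mul_of_pos_right hj (by positivity)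
    rw [div_mul_cancel₀ _ (by positivity : (ε * δ:ℝ) ≠ 0)] at hmul
    linarith [hV0 T]
  -- STEP 5 : squeeze the distance to consensus
  set G := SimpleGraph.fromRel (fun i j => ∃ e, te e = i ∧ he e = j) with hGdef
  set i0 : Fin n := Classical.arbitrary (Fin n) with hi0
  have wlk : ∀ i : Fin n, G.Walk i i0 := fun i => (hconn.preconnected i i0).some
  set D : ℕ := ∑ i, (wlk i).length with hD
  have hWD : ∀ i, ((wlk i).length : ℝ) ≤ (D : ℝ) := by
    intro i
    have : (wlk i).length ≤ D :=
      Finset.single_le_sum (f := fun i => (wlk i).length)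
        (fun i' _ => Nat.zero_le _) (Finset.mem_univ i)
    exact_mod_cast this
  set cD : ℝ := Real.sqrt (3 * n * (D:ℝ)^2) with hcD
  have hdistb : ∀ t, distToConsensus (x t) ≤ cD * g t := by
    intro t
    have hwb : ∀ i k, |x t i k - x t i0 k| ≤ (D:ℝ) * g t := by
      intro i k
      have hwalk := walk_bound hloop hB (x t) (g t) (fun e k' => hzg t e k') (wlk i) k
      calc |x t i k - x t i0 k| ≤ ((wlk i).length : ℝ) * g t := hwalk
        _ ≤ (D:ℝ) * g t := mul_le_mul_of_nonneg_right (hWD i) (hg0 t)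
    have h1 : nrmTot (fun i => x t i - x t i0) ≤ cD * g t := by
      rw [nrmTot]
      have hsum : ∑ i, ∑ k, ((fun i => x t i - x t i0) i k) ^ 2
          ≤ ∑ i : Fin n, ∑ k : Fin 3, ((D:ℝ) * g t)^2 := by
        refine Finset.sum_le_sum fun i _ => Finset.sum_le_sum fun k _ => ?_
        have habs : |(x t i - x t i0) k| ≤ (D:ℝ) * g t := hwb i k
        calc ((x t i - x t i0) k) ^ 2 = |(x t i - x t i0) k| ^ 2 := (sq_abs _).symm
          _ ≤ ((D:ℝ) * g t)^2 := by
              exact pow_le_pow_left₀ (abs_nonneg _) habs 2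
      calc Real.sqrt (∑ i, ∑ k, ((fun i => x t i - x t i0) i k) ^ 2)
          ≤ Real.sqrt (∑ i : Fin n, ∑ k : Fin 3, ((D:ℝ) * g t)^2) := Real.sqrt_le_sqrt hsum
        _ = Real.sqrt ((3 * n * (D:ℝ)^2) * (g t)^2) := by
            congr 1
            rw [Finset.sum_const, Finset.sum_const, Finset.card_univ, Finset.card_univ]
            simp only [Fintype.card_fin, nsmul_eq_mul]
            push_cast
            ring
        _ = cD * g t := by
            rw [hcD, Real.sqrt_mul (by positivity), Real.sqrt_sq (hg0 t)]
    have hmem : nrmTot (fun i => x t i - x t i0)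
        ∈ {d : ℝ | ∃ c : Fin 3 → ℝ, d = nrmTot (fun i => x t i - c)} := ⟨x t i0, rfl⟩
    have hbdd : BddBelow {d : ℝ | ∃ c : Fin 3 → ℝ, d = nrmTot (fun i => x t i - c)} := by
      refine ⟨0, fun d hd => ?_⟩
      obtain ⟨c, hc⟩ := hd
      rw [hc]
      exact Real.sqrt_nonneg _
    exact le_trans (csInf_le hbdd hmem) h1
  have hdist0 : ∀ t, 0 ≤ distToConsensus (x t) := by
    intro t
    refine le_csInf ⟨_, ⟨x t i0, rfl⟩⟩ fun d hd => ?_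
    obtain ⟨c, hc⟩ := hd
    rw [hc]
    exact Real.sqrt_nonneg _
  refine squeeze_zero_norm (a := fun t => cD * g t) (fun t => ?_) ?_
  · rw [Real.norm_eq_abs, abs_of_nonneg (hdist0 t)]
    exact hdistb t
  · have : Tendsto (fun t => cD * g t) atTop (nhds (cD * 0)) :=
      tendsto_const_nhds.mul hgto
    simpa using this
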